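/- Let R be a commutative ring, n ≥ 2, and c ∈ R. The n-ary semigroup (R,p) with p(x₁,...,xₙ) = c + Σ x_i is derived from a binary semigroup if and only if c = (n-1)c₀ for some c₀ ∈ R; in that case p(x₁,...,xₙ) = x₁ ∘ ⋯ ∘ xₙ for x ∘ y = x + y + c₀. -/
import Mathlib

private lemma stmt_19_foldl_aux {R : Type*} [CommRing R] (c₀ : R) :
    ∀ (l : List R) (a : R),
      l.foldl (fun u v => u + v + c₀) a = a + l.sum + l.length • c₀ := by
  intro l
  induction l with
  | nil => simp
  | cons hd tl ih =>
      intro a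
      simp only [List.foldl_cons, ih, List.sum_cons, List.length_cons, succ_nsmul]
      ring

theorem stmt_19 {R : Type*} [CommRing R] (n : ℕ) (hn : 2 ≤ n) (c : R) :
    ((∃ op : R → R → R,
        (∀ x y z : R, op (op x y) z = op x (op y z)) ∧
        ∀ x : Fin n → R,
          c + ∑ i, x i = (List.ofFn x).tail.foldl op (x ⟨0, by omega⟩)) ↔
      ∃ c₀ : R, c = ((n : R) - 1) * c₀) ∧
    ∀ c₀ : R, c = ((n : R) - 1) * c₀ →
      ∀ x : Fin n → R,
        c + ∑ i, x i =
          (List.ofFn x).tail.foldl (fun u v => u + v + c₀) (x ⟨0, by omega⟩) := by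
  obtain ⟨m, rfl⟩ : ∃ m, n = m + 2 := ⟨n - 2, by omega⟩
  -- the "derived" direction, used twice
  have main : ∀ c₀ : R, c = ((m + 2 : ℕ) - 1 : R) * c₀ →
      ∀ x : Fin (m + 2) → R,
        c + ∑ i, x i =
          (List.ofFn x).tail.foldl (fun u v => u + v + c₀) (x ⟨0, by omega⟩) := by
    intro c₀ hc x
    rw [List.ofFn_succ, List.tail_cons, stmt_19_foldl_aux, List.sum_ofFn,
      Fin.sum_univ_succ, List.length_ofFn, hc]
    have : ((m + 2 : ℕ) : R) - 1 = ((m + 1 : ℕ) : R) := by push_cast; ring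
    rw [this, ← nsmul_eq_mul]
    have h0 : x ⟨0, by omega⟩ = x 0 := rfl
    rw [h0]
    ring
  constructor
  · constructor
    · rintro ⟨op, hop, hid⟩
      -- key identity from test vectors (a, 0, ..., 0, b)
      have K : ∀ a b : R,
          op (List.foldl op a (List.replicate m 0)) b = c + a + b := by
        intro a b
        have h := hid (Fin.cons a (Fin.snoc (fun _ : Fin m => (0 : R)) b))
        rw [List.ofFn_succ] at h
        simp only [Fin.cons_zero, Fin.cons_succ, List.tail_cons] at h
        rw [List.ofFn_succ'] at h
        simp only [Fin.snoc_castSucc, Fin.snoc_last, List.ofFn_const,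
          List.concat_eq_append, List.foldl_append, List.foldl_cons,
          List.foldl_nil] at h
        have hsum : ∑ i, (Fin.cons a (Fin.snoc (fun _ : Fin m => (0 : R)) b)) i
            = a + b := by
          rw [Fin.sum_cons, Fin.sum_snoc]
          simp
        rw [hsum] at h
        have h0 : (⟨0, by omega⟩ : Fin (m + 2)) = 0 := rfl
        rw [h0, Fin.cons_zero] at h
        rw [← h]; ring
      -- op (c + a + b) z = c + a + op b z
      have assoc' : ∀ a b z : R, op (c + a + b) z = c + a + op b z := by
        intro a b z
        have h1 := hop (List.foldl op a (List.replicate m 0)) b z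
        rw [K a b, K a (op b z)] at h1
        exact h1
      -- op is translation: op t z = t + op 0 z
      have hform : ∀ t z : R, op t z = t + op 0 z := by
        intro t z
        have h := assoc' (t - c) 0 z
        rw [show c + (t - c) + 0 = t by ring] at h
        rw [h]; ring
      have Hform : ∀ (k : ℕ) (a : R),
          List.foldl op a (List.replicate k 0) = a + k • (op 0 0) := by
        intro k
        induction k with
        | zero => intro a; simp
        | succ k ih =>
            intro a
            rw [List.replicate_succ, List.foldl_cons, ih, hform a 0, succ_nsmul]
            ring
      have hK00 := K 0 0
      rw [Hform m 0, hform] at hK00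
      refine ⟨op 0 0, ?_⟩
      have h2 : ((m + 2 : ℕ) : R) - 1 = ((m + 1 : ℕ) : R) := by push_cast; ring
      rw [h2, ← nsmul_eq_mul, succ_nsmul]
      linear_combination -hK00
    · rintro ⟨c₀, hc⟩
      refine ⟨fun u v => u + v + c₀, fun x y z => by ring, fun x => main c₀ hc x⟩
  · exact main
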